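/- Suppose R is simply laced, i.e. ⟨α_i, α_j^∨⟩ ≥ −1 for all distinct i, j ∈ I. Let x ∈ Q(R) be dominant, fix a simple root α_{i₀}, and suppose z = y + (1/2)α_{i₀} lies in Q(R), where ⟨y, α_{i₀}^∨⟩ = 0, y is dominant, and ⟨y, ϖ_i⟩ ≤ ⟨x, ϖ_i⟩ for all i ∈ I. Then z is dominant, and consequently z ∈ Conv(O_x). -/

import Mathlib

open Module

/-- An irreducible reduced (crystallographic) root system `R` in a real vector space `V`
(playing the role of `Q(R) ⊗ ℝ`), together with a base of simple roots indexed by `ι`,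
the coroot pairings `u ↦ ⟨u, α^∨⟩` realised as linear functionals, and the fundamental
coweights `ϖ_i`, characterised by `⟨ϖ_i, α_j⟩ = δ_{ij}`. -/
structure RootSystemData (ι : Type*) (V : Type*) [Fintype ι] [DecidableEq ι]
    [AddCommGroup V] [Module ℝ V] where
  /-- the set of roots `R` -/
  isRoot : Set V
  /-- the coroot pairing: `coroot a u = ⟨u, a^∨⟩` -/
  coroot : V → (V →ₗ[ℝ] ℝ)
  /-- the simple roots `α_i` -/
  sroot : ι → V
  sroot_mem : ∀ i, sroot i ∈ isRoot
  coroot_self : ∀ a ∈ isRoot, coroot a a = 2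
  crystallographic : ∀ a ∈ isRoot, ∀ b ∈ isRoot, ∃ n : ℤ, coroot a b = (n : ℝ)
  reflect_mem : ∀ a ∈ isRoot, ∀ b ∈ isRoot, b - coroot a b • a ∈ isRoot
  reduced : ∀ a ∈ isRoot, ∀ t : ℝ, t • a ∈ isRoot → t = 1 ∨ t = -1
  finite : isRoot.Finite
  ne_zero : ∀ a ∈ isRoot, a ≠ 0
  span_top : Submodule.span ℝ isRoot = ⊤
  /-- every root is a nonnegative or nonpositive integral combination of the simple roots -/
  base : ∀ a ∈ isRoot, (∃ c : ι → ℕ, a = ∑ i, (c i : ℝ) • sroot i) ∨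
    (∃ c : ι → ℕ, a = -∑ i, (c i : ℝ) • sroot i)
  /-- the root system is irreducible -/
  irreducible : ∀ s t : Set V, isRoot = s ∪ t →
    (∀ a ∈ s, ∀ b ∈ t, coroot a b = 0) → s = ∅ ∨ t = ∅
  /-- the fundamental coweights `ϖ_i`, as linear functionals `u ↦ ⟨u, ϖ_i⟩` -/
  coweight : ι → (V →ₗ[ℝ] ℝ)
  coweight_sroot : ∀ i j, coweight i (sroot j) = if i = j then 1 else 0

namespace RootSystemData

variable {ι V : Type*} [Fintype ι] [DecidableEq ι] [AddCommGroup V] [Module ℝ V]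
variable (P : RootSystemData ι V)

/-- The root lattice `Q(R)`, i.e. the `ℤ`-span of the roots. -/
def rootLattice : AddSubgroup V := AddSubgroup.closure P.isRoot

/-- The Weyl group `W`, generated by the reflections in the roots. -/
def weylGroup : Subgroup (V ≃ₗ[ℝ] V) :=
  Subgroup.closure { w | ∃ a, ∃ ha : a ∈ P.isRoot, w = Module.reflection (P.coroot_self a ha) }

/-- The Weyl orbit `O_x = {wx : w ∈ W}` of an element `x`. -/
def orbit (x : V) : Set V := { v | ∃ w ∈ P.weylGroup, v = w x }

/-- An element `u` is dominant if `⟨u, α_i^∨⟩ ≥ 0` for all `i ∈ I`. -/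
def IsDominant (u : V) : Prop := ∀ i, 0 ≤ P.coroot (P.sroot i) u

/-- The simple reflection `s_{α_i}`. -/
def sref (i : ι) : V ≃ₗ[ℝ] V :=
  Module.reflection (P.coroot_self (P.sroot i) (P.sroot_mem i))

end RootSystemData

namespace RootSystemData

variable {ι V : Type*} [Fintype ι] [DecidableEq ι] [AddCommGroup V] [Module ℝ V]
variable (P : RootSystemData ι V)

lemma sroot_span : Submodule.span ℝ (Set.range P.sroot) = ⊤ := by
  rw [← top_le_iff, ← P.span_top, Submodule.span_le]
  intro a ha
  rcases P.base a ha with ⟨c, rfl⟩ | ⟨c, rfl⟩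
  · exact Submodule.sum_mem _ fun i _ =>
      Submodule.smul_mem _ _ (Submodule.subset_span ⟨i, rfl⟩)
  · exact Submodule.neg_mem _ <| Submodule.sum_mem _ fun i _ =>
      Submodule.smul_mem _ _ (Submodule.subset_span ⟨i, rfl⟩)

lemma coweight_sum (c : ι → ℝ) (k : ι) :
    P.coweight k (∑ i, c i • P.sroot i) = c k := by
  rw [map_sum]
  simp only [map_smul, P.coweight_sroot, smul_eq_mul]
  simp [Finset.sum_ite_eq]

lemma repr_eq (v : V) : v = ∑ i, P.coweight i v • P.sroot i := by
  have h : (LinearMap.id : V →ₗ[ℝ] V)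
      = ∑ i, (P.coweight i).smulRight (P.sroot i) := by
    apply LinearMap.ext_on P.sroot_span
    rintro _ ⟨j, rfl⟩
    simp only [LinearMap.id_coe, id_eq, LinearMap.sum_apply, LinearMap.smulRight_apply,
      P.coweight_sroot]
    simp [ite_smul, Finset.sum_ite_eq]
  have := congrFun (congrArg (fun f : V →ₗ[ℝ] V => (f : V → V)) h) v
  simpa using this

lemma int_on_lattice (φ : V →ₗ[ℝ] ℝ) (h : ∀ a ∈ P.isRoot, ∃ n : ℤ, φ a = n) :
    ∀ v ∈ P.rootLattice, ∃ n : ℤ, φ v = n := by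
  intro v hv
  refine AddSubgroup.closure_induction h ⟨0, by simp⟩ ?_ ?_ hv
  · rintro a b _ _ ⟨m, hm⟩ ⟨n, hn⟩
    exact ⟨m + n, by push_cast; simp [hm, hn]⟩
  · rintro a _ ⟨m, hm⟩
    exact ⟨-m, by push_cast; simp [hm]⟩

lemma int_coweight (k : ι) : ∀ v ∈ P.rootLattice, ∃ n : ℤ, P.coweight k v = n := by
  refine P.int_on_lattice _ ?_
  intro a ha
  rcases P.base a ha with ⟨c, rfl⟩ | ⟨c, rfl⟩
  · exact ⟨c k, by rw [P.coweight_sum]; norm_num⟩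
  · exact ⟨-(c k), by rw [map_neg, P.coweight_sum]; push_cast; ring⟩

lemma int_coroot (i : ι) : ∀ v ∈ P.rootLattice, ∃ n : ℤ, P.coroot (P.sroot i) v = n :=
  P.int_on_lattice _ (fun a ha => P.crystallographic _ (P.sroot_mem i) a ha)

lemma root_sign {a : V} (ha : a ∈ P.isRoot) :
    (∀ k, 0 ≤ P.coweight k a) ∨ (∀ k, P.coweight k a ≤ 0) := by
  rcases P.base a ha with ⟨c, rfl⟩ | ⟨c, rfl⟩
  · exact Or.inl fun k => by rw [P.coweight_sum]; positivity
  · exact Or.inr fun k => by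
      rw [map_neg, P.coweight_sum]; simp


lemma mul_apply' (f g : V ≃ₗ[ℝ] V) (v : V) : (f * g) v = f (g v) := rfl

lemma sref_apply (i : ι) (v : V) :
    P.sref i v = v - P.coroot (P.sroot i) v • P.sroot i := by
  rw [show P.sref i = Module.reflection (P.coroot_self (P.sroot i) (P.sroot_mem i)) from rfl,
    Module.reflection_apply]

lemma sref_mem (i : ι) : P.sref i ∈ P.weylGroup :=
  Subgroup.subset_closure ⟨P.sroot i, P.sroot_mem i, rfl⟩

lemma weyl_maps_root : ∀ w ∈ P.weylGroup, ∀ a ∈ P.isRoot, w a ∈ P.isRoot := by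
  have key : ∀ w ∈ P.weylGroup,
      (∀ a ∈ P.isRoot, w a ∈ P.isRoot) ∧ (∀ a ∈ P.isRoot, w⁻¹ a ∈ P.isRoot) := by
    intro w hw
    refine Subgroup.closure_induction ?_ ?_ ?_ ?_ hw
    · rintro x ⟨b, hb, rfl⟩
      have hr : ∀ a ∈ P.isRoot, Module.reflection (P.coroot_self b hb) a ∈ P.isRoot := by
        intro a ha
        rw [Module.reflection_apply]
        exact P.reflect_mem b hb a ha
      refine ⟨hr, fun a ha => ?_⟩
      show (Module.reflection (P.coroot_self b hb)).symm a ∈ P.isRoot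
      rw [Module.reflection_symm]
      exact hr a ha
    · exact ⟨fun a ha => ha, fun a ha => by simpa using ha⟩
    · rintro x y hx hy ⟨hx1, hx2⟩ ⟨hy1, hy2⟩
      refine ⟨fun a ha => hx1 _ (hy1 a ha), fun a ha => ?_⟩
      rw [mul_inv_rev]
      exact hy2 _ (hx2 a ha)
    · rintro x hx ⟨h1, h2⟩
      exact ⟨h2, by simpa using h1⟩
  exact fun w hw => (key w hw).1

lemma weylGroup_finite : (P.weylGroup : Set (V ≃ₗ[ℝ] V)).Finite := by
  have hFin : Finite ↥P.isRoot := P.finite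
  have hS : (Set.pi (Set.univ : Set ↥P.isRoot) (fun _ => P.isRoot)).Finite :=
    Set.Finite.pi (fun _ => P.finite)
  refine Set.Finite.of_finite_image
    (f := fun (w : V ≃ₗ[ℝ] V) (a : ↥P.isRoot) => w a) (hS.subset ?_) ?_
  · rintro _ ⟨w, hw, rfl⟩ a _
    exact P.weyl_maps_root w hw a a.2
  · intro w1 _ w2 _ heq
    apply LinearEquiv.toLinearMap_injective
    apply LinearMap.ext_on P.span_top
    intro a ha
    exact congrFun heq ⟨a, ha⟩

lemma orbit_finite (v : V) : (P.orbit v).Finite := by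
  have h : P.orbit v ⊆ (fun w : V ≃ₗ[ℝ] V => w v) '' (P.weylGroup : Set _) := by
    rintro u ⟨w, hw, rfl⟩
    exact ⟨w, hw, rfl⟩
  exact (P.weylGroup_finite.image _).subset h

lemma mem_orbit_self (v : V) : v ∈ P.orbit v := ⟨1, one_mem _, rfl⟩

lemma exists_rho : ∃ ρ : V, ∀ i, P.coroot (P.sroot i) ρ = 2 := by
  classical
  set Pos := P.finite.toFinset.filter (fun a => ∀ k, 0 ≤ P.coweight k a) with hPos
  refine ⟨∑ a ∈ Pos, a, fun i => ?_⟩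
  have hmem : P.sroot i ∈ Pos := by
    simp only [hPos, Finset.mem_filter, Set.Finite.mem_toFinset]
    refine ⟨P.sroot_mem i, fun k => ?_⟩
    rw [P.coweight_sroot]
    split <;> norm_num
  set T := Pos.erase (P.sroot i) with hT
  have hmap : ∀ a ∈ T, a - P.coroot (P.sroot i) a • P.sroot i ∈ T := by
    intro a haT
    obtain ⟨hane, haPos⟩ := Finset.mem_erase.1 haT
    obtain ⟨haF, hapos⟩ := Finset.mem_filter.1 haPos
    have haR : a ∈ P.isRoot := (Set.Finite.mem_toFinset _).1 haF
    have hbR : a - P.coroot (P.sroot i) a • P.sroot i ∈ P.isRoot :=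
      P.reflect_mem _ (P.sroot_mem i) a haR
    have hj : ∃ j, j ≠ i ∧ 0 < P.coweight j a := by
      by_contra hcon
      push_neg at hcon
      have hall : ∀ j, j ≠ i → P.coweight j a = 0 :=
        fun j hji => le_antisymm (hcon j hji) (hapos j)
      have heqa : a = P.coweight i a • P.sroot i := by
        conv_lhs => rw [P.repr_eq a]
        rw [Finset.sum_eq_single i (fun j _ hji => by rw [hall j hji, zero_smul])
          (fun h => absurd (Finset.mem_univ i) h)]
      rcases P.reduced (P.sroot i) (P.sroot_mem i) (P.coweight i a)
          (by rw [← heqa]; exact haR) with h1 | h1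
      · exact hane (by rw [heqa, h1, one_smul])
      · have := hapos i
        rw [h1] at this
        linarith
    obtain ⟨j, hji, hjpos⟩ := hj
    have hbj : P.coweight j (a - P.coroot (P.sroot i) a • P.sroot i) = P.coweight j a := by
      rw [map_sub, map_smul, P.coweight_sroot]
      simp [hji]
    have hbpos : ∀ k, 0 ≤ P.coweight k (a - P.coroot (P.sroot i) a • P.sroot i) := by
      rcases P.root_sign hbR with h | h
      · exact h
      · exfalso
        have := h j
        rw [hbj] at this
        linarith
    refine Finset.mem_erase.2 ⟨fun hbeq => ?_,
      Finset.mem_filter.2 ⟨(Set.Finite.mem_toFinset _).2 hbR, hbpos⟩⟩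
    rw [hbeq, P.coweight_sroot] at hbj
    simp only [if_neg hji] at hbj
    linarith
  have hinvol : ∀ a : V,
      (a - P.coroot (P.sroot i) a • P.sroot i)
        - P.coroot (P.sroot i) (a - P.coroot (P.sroot i) a • P.sroot i) • P.sroot i = a := by
    intro a
    rw [map_sub, map_smul, P.coroot_self _ (P.sroot_mem i), smul_eq_mul]
    module
  have hsum_eq : ∑ a ∈ T, (a - P.coroot (P.sroot i) a • P.sroot i) = ∑ a ∈ T, a := by
    refine Finset.sum_nbij' (fun a => a - P.coroot (P.sroot i) a • P.sroot i)
      (fun a => a - P.coroot (P.sroot i) a • P.sroot i) hmap hmap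
      (fun a _ => hinvol a) (fun a _ => hinvol a) ?_
    intro a _
    rfl
  have h2 : (∑ a ∈ T, a) - (∑ a ∈ T, P.coroot (P.sroot i) a) • P.sroot i = ∑ a ∈ T, a := by
    rw [Finset.sum_smul, ← Finset.sum_sub_distrib]
    exact hsum_eq
  have h4 : ∑ a ∈ T, P.coroot (P.sroot i) a = 0 := by
    have h3 : (∑ a ∈ T, P.coroot (P.sroot i) a) • P.sroot i = 0 := by
      have := sub_eq_self.1 h2
      exact this
    rcases smul_eq_zero.1 h3 with h | h
    · exact h
    · exact absurd h (P.ne_zero _ (P.sroot_mem i))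
  have hsplit : ∑ a ∈ Pos, a = P.sroot i + ∑ a ∈ T, a :=
    (Finset.add_sum_erase Pos (fun a => a) hmem).symm
  rw [hsplit, map_add, P.coroot_self _ (P.sroot_mem i), map_sum, h4, add_zero]

end RootSystemData


/-- Suppose `R` is simply laced, i.e. `⟨α_i, α_j^∨⟩ ≥ −1` for all distinct
`i, j ∈ I`. With `x, y, z, i₀` as in Lemma 1.1, `z` is dominant, and consequently
`z ∈ Conv(O_x)`. -/
theorem statement7 {ι V : Type*} [Fintype ι] [DecidableEq ι] [AddCommGroup V] [Module ℝ V]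
    (P : RootSystemData ι V)
    (hsl : ∀ i j : ι, i ≠ j → -1 ≤ P.coroot (P.sroot j) (P.sroot i))
    (x y z : V) (i₀ : ι)
    (hx : x ∈ P.rootLattice) (hxdom : P.IsDominant x)
    (hz : z = y + (1 / 2 : ℝ) • P.sroot i₀) (hzQ : z ∈ P.rootLattice)
    (h1 : P.coroot (P.sroot i₀) y = 0)
    (h2 : P.IsDominant y)
    (h3 : ∀ i, P.coweight i y ≤ P.coweight i x) :
    P.IsDominant z ∧ z ∈ convexHull ℝ (P.orbit x) := by
  have hzdom : P.IsDominant z := by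
    intro i
    by_cases hii : i = i₀
    · subst hii
      rw [hz, map_add, map_smul, h1, P.coroot_self _ (P.sroot_mem i)]
      norm_num
    · obtain ⟨n, hn⟩ := P.int_coroot i z hzQ
      have hy := h2 i
      have hsl' := hsl i₀ i (fun h => hii h.symm)
      have hzi : P.coroot (P.sroot i) z
          = P.coroot (P.sroot i) y + (1/2) * P.coroot (P.sroot i) (P.sroot i₀) := by
        rw [hz, map_add, map_smul, smul_eq_mul]
      have hge : (-1/2 : ℝ) ≤ (n:ℝ) := by rw [← hn, hzi]; linarith
      have hn0 : (0:ℤ) ≤ n := by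
        by_contra hneg
        push_neg at hneg
        have : n ≤ -1 := by omega
        have : (n:ℝ) ≤ -1 := by exact_mod_cast this
        linarith
      rw [hn]
      exact_mod_cast hn0
  have hcw : ∀ i, P.coweight i z ≤ P.coweight i x := by
    intro i
    by_cases hii : i = i₀
    · subst hii
      obtain ⟨m, hm⟩ := P.int_coweight i z hzQ
      obtain ⟨n, hn⟩ := P.int_coweight i x hx
      have hyz : P.coweight i z = P.coweight i y + 1/2 := by
        rw [hz, map_add, map_smul, P.coweight_sroot, if_pos rfl]
        norm_num
      have h3' := h3 i
      have hmn : (m:ℝ) < (n:ℝ) + 1 := by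
        rw [← hm] at *
        rw [← hn] at *
        rw [hyz]
        linarith
      have : m ≤ n := by exact_mod_cast Int.lt_add_one_iff.1 (by exact_mod_cast hmn)
      rw [hm, hn]
      exact_mod_cast this
    · have hyz : P.coweight i z = P.coweight i y := by
        rw [hz, map_add, map_smul, P.coweight_sroot, if_neg hii]
        simp
      rw [hyz]
      exact h3 i
  refine ⟨hzdom, ?_⟩
  by_contra hnot
  have hli : LinearIndependent ℝ P.sroot := by
    rw [Fintype.linearIndependent_iff]
    intro g hg j
    have hcg := congrArg (P.coweight j) hg
    rw [P.coweight_sum] at hcg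
    simpa using hcg
  let B : Basis ι ℝ V := Module.Basis.mk hli (le_of_eq P.sroot_span.symm)
  haveI : FiniteDimensional ℝ V := Module.Finite.of_basis B
  let e := B.equivFun
  have himg : e z ∉ convexHull ℝ (⇑e '' P.orbit x) := by
    intro hmem
    apply hnot
    have hee : ⇑e '' P.orbit x = ⇑e.toLinearMap '' P.orbit x := rfl
    rw [hee, ← LinearMap.image_convexHull] at hmem
    obtain ⟨v, hv, hev⟩ := hmem
    have hvz : v = z := e.injective hev
    exact hvz ▸ hv
  obtain ⟨f, u, hfu, huz⟩ := geometric_hahn_banach_closed_point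
    (convex_convexHull ℝ _) (((P.orbit_finite x).image _).isClosed_convexHull ℝ) himg
  set g : V →ₗ[ℝ] ℝ := f.toLinearMap ∘ₗ (e.toLinearMap) with hgdef
  have hgx : ∀ w ∈ P.weylGroup, g (w x) < u := by
    intro w hw
    exact hfu _ (subset_convexHull ℝ _ ⟨w x, ⟨w, hw, rfl⟩, rfl⟩)
  have hgz : u < g z := huz
  obtain ⟨ρ, hρ⟩ := P.exists_rho
  obtain ⟨r₁, hr₁mem, hmax₁⟩ :=
    Set.exists_max_image (P.orbit ρ) g (P.orbit_finite ρ) ⟨ρ, P.mem_orbit_self ρ⟩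
  set D := g r₁ - g ρ with hD
  have hD0 : 0 ≤ D := sub_nonneg.2 (hmax₁ ρ (P.mem_orbit_self ρ))
  set ε := (g z - u) / (D + 1) with hε
  have hε0 : 0 < ε := div_pos (by linarith) (by linarith)
  have hεD : ε * (D + 1) = g z - u := by
    rw [hε, div_mul_cancel₀]
    linarith
  obtain ⟨mm, hm_mem, hmax⟩ :=
    Set.exists_max_image (P.orbit (z + ε • ρ)) g (P.orbit_finite _) ⟨_, P.mem_orbit_self _⟩
  obtain ⟨w, hw, rfl⟩ := hm_mem
  have hwpos : ∀ i, 0 ≤ g (w (P.sroot i)) := by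
    intro i
    have hc : 0 < P.coroot (P.sroot i) (z + ε • ρ) := by
      rw [map_add, map_smul, hρ i, smul_eq_mul]
      have := hzdom i
      linarith
    have hmem2 : (w * P.sref i) (z + ε • ρ) ∈ P.orbit (z + ε • ρ) :=
      ⟨_, mul_mem hw (P.sref_mem i), rfl⟩
    have h1' := hmax _ hmem2
    simp only [RootSystemData.mul_apply', P.sref_apply, map_sub, map_smul, smul_eq_mul] at h1'
    by_contra hneg
    push_neg at hneg
    nlinarith [mul_pos hc (neg_pos.2 hneg)]
  have hb : g z + ε * g ρ ≤ g (w z) + ε * g (w ρ) := by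
    have h0 := hmax _ (P.mem_orbit_self _)
    simpa only [map_add, map_smul, smul_eq_mul] using h0
  have hwρ : g (w ρ) ≤ g r₁ := hmax₁ _ ⟨w, hw, rfl⟩
  have hc2 : g (w z) ≤ g (w x) := by
    have hxz : w x - w z = ∑ i, P.coweight i (x - z) • w (P.sroot i) := by
      conv_lhs => rw [← map_sub, P.repr_eq (x - z)]
      rw [map_sum]
      simp only [map_smul]
    have hnn : 0 ≤ g (w x) - g (w z) := by
      rw [← map_sub, hxz, map_sum]
      apply Finset.sum_nonneg
      intro i _
      rw [map_smul, smul_eq_mul]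
      have hxi : 0 ≤ P.coweight i (x - z) := by
        rw [map_sub]
        have := hcw i
        linarith
      exact mul_nonneg hxi (hwpos i)
    linarith
  have hfinal : ε * (g (w ρ) - g ρ) ≤ ε * D := by
    apply mul_le_mul_of_nonneg_left _ hε0.le
    linarith
  have hgwx := hgx w hw
  nlinarith [hb, hc2, hfinal, hεD, hgwx, hε0]
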